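/- In the amalgamation setting: for all m and n, if x ∈ Aₙ, y ∈ Aₘ, and x <_t y, then x <ₙ π_{mn}(y) and π_{nm}(x) <ₘ y. In particular, for x, y ∈ Aₙ one has x <_t y if and only if x <ₙ y. -/
import Mathlib


open Cardinal Set

noncomputable section

/-- A partial function from ordinals to ordinals, represented by its graph. -/
abbrev ColFun := Set (Ordinal × Ordinal)

/-- `q ∈ Col(X)`: `q` is (the graph of) a function whose domain is an ordinal `< ω₁`
and whose range is a subset of `X`. -/
def IsColFun (X : Set Ordinal) (q : ColFun) : Prop :=
  (∀ a b b', (a, b) ∈ q → (a, b') ∈ q → b = b') ∧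
  (∃ δ : Ordinal, δ < (aleph 1).ord ∧ ∀ a : Ordinal, (∃ b, (a, b) ∈ q) ↔ a < δ) ∧
  (∀ a b, (a, b) ∈ q → b ∈ X)

/-- A quadruple `((A, <), B, C, F)`; `F` is a partial function represented by its graph. -/
structure Quad where
  A : Set Ordinal
  lt : Ordinal → Ordinal → Prop
  B : Set (Ordinal × ColFun)
  C : Set (ℕ → Ordinal)
  F : Set ((ℕ → Ordinal) × (Ordinal × ColFun) × ℕ)

namespace Quad

/-- `x ≤ᵣ y`. -/
def leR (r : Quad) (x y : Ordinal) : Prop := r.lt x y ∨ x = y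

/-- `x ⊥ᵣ y`: no `z ∈ Aᵣ` with `z ≤ᵣ x` and `z ≤ᵣ y`. -/
def Incomp (r : Quad) (x y : Ordinal) : Prop := ¬ ∃ z ∈ r.A, r.leR z x ∧ r.leR z y

/-- `r` is a forcing condition. -/
def IsCond (r : Quad) : Prop :=
  -- (1) A is a countable set of ordinals < ω₂
  r.A.Countable ∧
  (∀ a ∈ r.A, a < (aleph 2).ord) ∧
  -- (2) <ᵣ is a strict partial order on A
  (∀ a b, r.lt a b → a ∈ r.A ∧ b ∈ r.A) ∧
  (∀ a b c, r.lt a b → r.lt b c → r.lt a c) ∧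
  -- (3) b <ᵣ a implies a < b (whence <ᵣ is irreflexive and asymmetric)
  (∀ a b, r.lt b a → a < b) ∧
  -- (4) B is a countable subset of A × Col(A) with p ∈ range q for (p,q) ∈ B
  r.B.Countable ∧
  (∀ pq ∈ r.B, pq.1 ∈ r.A ∧ IsColFun r.A pq.2 ∧ ∃ α, (α, pq.1) ∈ pq.2) ∧
  -- (5) C is a countable set of <ᵣ-descending sequences in A without lower bound
  r.C.Countable ∧
  (∀ a ∈ r.C, (∀ n, a n ∈ r.A) ∧ (∀ n, r.lt (a (n + 1)) (a n)) ∧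
    ¬ ∃ z ∈ r.A, ∀ n, r.leR z (a n)) ∧
  -- (6) F is a (partial) function whose domain consists exactly of the pairs
  -- (⟨aₙ⟩, (p,q)) with ⟨aₙ⟩ ∈ C, (p,q) ∈ B, p ≥ a₀, satisfying (*)
  (∀ x ∈ r.F, x.1 ∈ r.C ∧ x.2.1 ∈ r.B ∧ x.1 0 ≤ x.2.1.1) ∧
  (∀ a pq, a ∈ r.C → pq ∈ r.B → a 0 ≤ pq.1 → ∃! m : ℕ, (a, pq, m) ∈ r.F) ∧
  (∀ a pq m, (a, pq, m) ∈ r.F →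
    ∀ p'q' ∈ r.B, r.leR p'q'.1 pq.1 → pq.2 ⊆ p'q'.2 →
      r.lt p'q'.1 (a m) → ∃ k, r.Incomp p'q'.1 (a k))

/-- `Ext r s`: `r ≤_R s`, i.e. `r` is stronger than `s`. -/
def Ext (r s : Quad) : Prop :=
  s.A ⊆ r.A ∧
  (∀ a ∈ s.A, ∀ b ∈ s.A, (r.lt a b ↔ s.lt a b)) ∧
  (∀ a ∈ s.A, ∀ b ∈ s.A, (r.Incomp a b ↔ s.Incomp a b)) ∧
  s.B ⊆ r.B ∧ s.C ⊆ r.C ∧ s.F ⊆ r.F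

end Quad

open Quad

/-- Push a `Col`-function forward along a map of ordinals (acting on the range). -/
def mapCol (f : Ordinal → Ordinal) (q : ColFun) : ColFun :=
  {x | ∃ a b, (a, b) ∈ q ∧ x = (a, f b)}

/-- The amalgamation setting: a sequence of conditions forming a Δ-system with root `D`,
a commutative system of isomorphisms `π`, and descending chains `cⁿ` matched by `π`. -/
structure Amalg where
  r : ℕ → Quad
  cond : ∀ n, (r n).IsCond
  D : Set Ordinal
  inter : ∀ m n : ℕ, m < n → (r m).A ∩ (r n).A = D
  supD_lt : ∀ m : ℕ, ∀ x ∈ (r m).A \ D, sSup D < x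
  supA_lt : ∀ m n : ℕ, m < n → ∀ x ∈ (r n).A \ D, sSup (r m).A < x
  lt_agree : ∀ m n : ℕ, ∀ a ∈ D, ∀ b ∈ D, ((r m).lt a b ↔ (r n).lt a b)
  incomp_agree : ∀ m n : ℕ, ∀ a ∈ D, ∀ b ∈ D, ((r m).Incomp a b ↔ (r n).Incomp a b)
  B_agree : ∀ m n : ℕ, ∀ pq : Ordinal × ColFun, pq.1 ∈ D → IsColFun D pq.2 →
    (pq ∈ (r m).B ↔ pq ∈ (r n).B)
  C_agree : ∀ m n : ℕ, ∀ a : ℕ → Ordinal, (∀ k, a k ∈ D) → (a ∈ (r m).C ↔ a ∈ (r n).C)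
  pi : ℕ → ℕ → Ordinal → Ordinal
  pi_mem : ∀ m n : ℕ, ∀ x ∈ (r m).A, pi m n x ∈ (r n).A
  pi_id : ∀ m : ℕ, ∀ x ∈ (r m).A, pi m m x = x
  pi_inv : ∀ m n : ℕ, ∀ x ∈ (r m).A, pi n m (pi m n x) = x
  pi_comm : ∀ m n k : ℕ, ∀ x ∈ (r m).A, pi n k (pi m n x) = pi m k x
  pi_idD : ∀ m n : ℕ, ∀ x ∈ D, pi m n x = x
  pi_iso : ∀ m n : ℕ, ∀ x ∈ (r m).A, ∀ y ∈ (r m).A,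
    ((r m).lt x y ↔ (r n).lt (pi m n x) (pi m n y))
  pi_B : ∀ m n : ℕ, ∀ pq ∈ (r m).B, (pi m n pq.1, mapCol (pi m n) pq.2) ∈ (r n).B
  pi_C : ∀ m n : ℕ, ∀ a ∈ (r m).C, (fun k => pi m n (a k)) ∈ (r n).C
  pi_F : ∀ m n : ℕ, ∀ x ∈ (r m).F,
    ((fun k => pi m n (x.1 k)), (pi m n x.2.1.1, mapCol (pi m n) x.2.1.2), x.2.2) ∈ (r n).F
  c : ℕ → ℕ → Ordinal
  c_mem : ∀ n k : ℕ, c n k ∈ (r n).A \ D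
  c_dec : ∀ n k : ℕ, (r n).lt (c n (k + 1)) (c n k)
  pi_c : ∀ m n k : ℕ, pi m n (c m k) = c n k

namespace Amalg

/-- `A_t = ⋃ₙ Aₙ`. -/
def At (S : Amalg) : Set Ordinal := ⋃ n, (S.r n).A

/-- `<_t`: the transitive closure of the union of the `<ₙ` together with the pairs
`aⁿ⁺¹ₙ₊₁ <_t bⁿₙ` (recall `aⁿₖ = cⁿ₂ₖ` and `bⁿₖ = cⁿ₂ₖ₊₁`). -/
def ltT (S : Amalg) : Ordinal → Ordinal → Prop :=
  Relation.TransGen (fun x y =>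
    (∃ n, (S.r n).lt x y) ∨ ∃ n : ℕ, x = S.c (n + 1) (2 * (n + 1)) ∧ y = S.c n (2 * n + 1))

/-- `x ≤_t y`. -/
def leT (S : Amalg) (x y : Ordinal) : Prop := S.ltT x y ∨ x = y

/-- `x` and `y` are compatible in `<_t`. -/
def CompatT (S : Amalg) (x y : Ordinal) : Prop := ∃ z ∈ S.At, S.leT z x ∧ S.leT z y

end Amalg

/-- Lemma 7(ii): if `x ∈ Aₙ`, `y ∈ Aₘ` and `x <_t y` then `x <ₙ π_{mn} y` and
`π_{nm} x <ₘ y`; in particular for `x, y ∈ Aₙ`, `x <_t y ↔ x <ₙ y`. -/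
theorem stmt7 (S : Amalg) :
    (∀ m n : ℕ, ∀ x ∈ (S.r n).A, ∀ y ∈ (S.r m).A,
      S.ltT x y → (S.r n).lt x (S.pi m n y) ∧ (S.r m).lt (S.pi n m x) y) ∧
    (∀ n : ℕ, ∀ x ∈ (S.r n).A, ∀ y ∈ (S.r n).A, (S.ltT x y ↔ (S.r n).lt x y)) := by
  have memD : ∀ k m : ℕ, k ≠ m → ∀ y, y ∈ (S.r k).A → y ∈ (S.r m).A → y ∈ S.D := by
    intro k m hkm y hk hm
    rcases lt_or_gt_of_ne hkm with h | h
    · rw [← S.inter k m h]; exact ⟨hk, hm⟩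
    · rw [← S.inter m k h]; exact ⟨hm, hk⟩
  have pieq : ∀ k m n : ℕ, ∀ y, y ∈ (S.r k).A → y ∈ (S.r m).A →
      S.pi k n y = S.pi m n y := by
    intro k m n y hk hm
    by_cases h : k = m
    · subst h; rfl
    · have hD := memD k m h y hk hm
      rw [S.pi_idD k n y hD, S.pi_idD m n y hD]
  have base : ∀ x y,
      ((∃ k, (S.r k).lt x y) ∨
        ∃ j : ℕ, x = S.c (j + 1) (2 * (j + 1)) ∧ y = S.c j (2 * j + 1)) →
      x ∈ S.At ∧ y ∈ S.At ∧
      ∀ n m : ℕ, x ∈ (S.r n).A → y ∈ (S.r m).A → (S.r n).lt x (S.pi m n y) := by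
    rintro x y (⟨k, hk⟩ | ⟨j, hx, hy⟩)
    · have hxk := ((S.cond k).2.2.1 x y hk).1
      have hyk := ((S.cond k).2.2.1 x y hk).2
      refine ⟨Set.mem_iUnion.mpr ⟨k, hxk⟩, Set.mem_iUnion.mpr ⟨k, hyk⟩, ?_⟩
      intro n m hxn hym
      have hlt := (S.pi_iso k n x hxk y hyk).mp hk
      have hxeq : S.pi k n x = x := by
        by_cases h : k = n
        · subst h; exact S.pi_id k x hxk
        · exact S.pi_idD k n x (memD k n h x hxk hxn)
      rw [hxeq, pieq k m n y hyk hym] at hlt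
      exact hlt
    · subst hx; subst hy
      have hx1 := S.c_mem (j + 1) (2 * (j + 1))
      have hy1 := S.c_mem j (2 * j + 1)
      refine ⟨Set.mem_iUnion.mpr ⟨j + 1, hx1.1⟩, Set.mem_iUnion.mpr ⟨j, hy1.1⟩, ?_⟩
      intro n m hxn hym
      have hn : n = j + 1 := by
        by_contra h
        exact hx1.2 (memD n (j + 1) h _ hxn hx1.1)
      have hm : m = j := by
        by_contra h
        exact hy1.2 (memD m j h _ hym hy1.1)
      subst hn
      rw [hm]
      rw [S.pi_c j (j + 1) (2 * j + 1)]
      have h2 : 2 * (j + 1) = 2 * j + 1 + 1 := by ring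
      rw [h2]
      exact S.c_dec (j + 1) (2 * j + 1)
  have key : ∀ x y, S.ltT x y → x ∈ S.At ∧ y ∈ S.At ∧
      ∀ n m : ℕ, x ∈ (S.r n).A → y ∈ (S.r m).A → (S.r n).lt x (S.pi m n y) := by
    intro x y h
    induction h with
    | single hb => exact base _ _ hb
    | tail hxy hb ih =>
      obtain ⟨hx, hbmem, ihP⟩ := ih
      obtain ⟨-, hc, bP⟩ := base _ _ hb
      refine ⟨hx, hc, ?_⟩
      intro n m hxn hcm
      obtain ⟨k, hbk⟩ := Set.mem_iUnion.mp hbmem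
      have h1 := ihP n k hxn hbk
      have h2 := bP k m hbk hcm
      have h3 := (S.pi_iso k n _ hbk _ (S.pi_mem m k _ hcm)).mp h2
      rw [S.pi_comm m k n _ hcm] at h3
      exact (S.cond n).2.2.2.1 _ _ _ h1 h3
  constructor
  · intro m n x hx y hy h
    have h1 := (key x y h).2.2 n m hx hy
    refine ⟨h1, ?_⟩
    have h2 := (S.pi_iso n m x hx _ (S.pi_mem m n y hy)).mp h1
    rwa [S.pi_inv m n y hy] at h2
  · intro n x hx y hy
    constructor
    · intro h
      have h1 := (key x y h).2.2 n n hx hy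
      rwa [S.pi_id n y hy] at h1
    · intro h
      exact Relation.TransGen.single (Or.inl ⟨n, h⟩)
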